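/- arXiv:math/0605643 — 2 statements merged into one kernel-verified Lean document; each statement's English description precedes it below -/
import Mathlib

section
/- Deletion-restriction: for a hyperplane H in an arrangement A, with A' = A \ {H} and A'' = {H' ∩ H : H' ∈ A', H' ∩ H ≠ ∅} (an arrangement in H), the characteristic polynomials satisfy χ(A, t) = χ(A', t) − χ(A'', t). -/
open Polynomial
open scoped Classical
noncomputable section

/-- The ambient vector space `ℂ^ℓ`. -/
abbrev Vsp (ℓ : ℕ) : Type := Fin ℓ → ℂ

namespace Arrangement

variable {ℓ : ℕ}

/-- The (affine) dimension of an affine subspace of `ℂ^ℓ`. -/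
def adim (X : AffineSubspace ℂ (Vsp ℓ)) : ℕ := Module.finrank ℂ X.direction

/-- `H` is an affine hyperplane of the ambient affine subspace `W`. -/
def IsHyperplaneIn (W H : AffineSubspace ℂ (Vsp ℓ)) : Prop :=
  H ≤ W ∧ H ≠ ⊥ ∧ adim H + 1 = adim W

/-- The intersection poset `L(𝒜)` of the arrangement `𝒜` inside the ambient
affine subspace `W`: all nonempty intersections of subfamilies of `𝒜`
(the empty intersection giving the ambient space `W` itself). -/
def interPoset (W : AffineSubspace ℂ (Vsp ℓ)) (𝒜 : Finset (AffineSubspace ℂ (Vsp ℓ))) :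
    Finset (AffineSubspace ℂ (Vsp ℓ)) :=
  (𝒜.powerset.image (fun I : Finset (AffineSubspace ℂ (Vsp ℓ)) => W ⊓ I.inf id)).filter (fun X => X ≠ ⊥)

/-- The Möbius function of the intersection poset, computed with recursion fuel:
`μ(W) = 1` and `μ(X) = - ∑_{Y > X} μ(Y)` (reverse-inclusion order, so `Y > X`
means `X < Y` as subspaces).  Fuel `n ≥ codim X` gives the correct value. -/
def mobiusFuel (W : AffineSubspace ℂ (Vsp ℓ)) (𝒜 : Finset (AffineSubspace ℂ (Vsp ℓ))) :
    ℕ → AffineSubspace ℂ (Vsp ℓ) → ℤ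
  | 0, _ => 1
  | n + 1, X =>
      if X = W then 1
      else - ∑ Y ∈ (interPoset W 𝒜).filter (fun Y => X < Y), mobiusFuel W 𝒜 n Y

/-- The Möbius function `μ` of `L(𝒜)` (fuel `ℓ` suffices). -/
def mobius (W : AffineSubspace ℂ (Vsp ℓ)) (𝒜 : Finset (AffineSubspace ℂ (Vsp ℓ)))
    (X : AffineSubspace ℂ (Vsp ℓ)) : ℤ :=
  mobiusFuel W 𝒜 ℓ X

/-- The characteristic polynomial `χ(𝒜, t) = ∑_{X ∈ L(𝒜)} μ(X) t^{dim X}`. -/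
def charPoly (W : AffineSubspace ℂ (Vsp ℓ)) (𝒜 : Finset (AffineSubspace ℂ (Vsp ℓ))) :
    Polynomial ℤ :=
  ∑ X ∈ interPoset W 𝒜, C (mobius W 𝒜 X) * (Polynomial.X : Polynomial ℤ) ^ (adim X)

/-- `𝒜` is essential (in the ambient subspace `W`): it contains `dim W` hyperplanes
whose defining linear forms are linearly independent, equivalently whose directions
intersect `W`'s direction trivially. -/
def EssentialIn (W : AffineSubspace ℂ (Vsp ℓ)) (𝒜 : Finset (AffineSubspace ℂ (Vsp ℓ))) : Prop :=
  ∃ s ⊆ 𝒜, s.card = adim W ∧ (s.inf fun H => H.direction) ⊓ W.direction = ⊥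

/-- The restriction `𝒜 ∩ W = {H ∩ W : H ∈ 𝒜, H ∩ W ≠ ∅}` of the arrangement `𝒜`
to the affine subspace `W`. -/
def restrictTo (W : AffineSubspace ℂ (Vsp ℓ)) (𝒜 : Finset (AffineSubspace ℂ (Vsp ℓ))) :
    Finset (AffineSubspace ℂ (Vsp ℓ)) :=
  (𝒜.image fun H => H ⊓ W).filter fun X => X ≠ ⊥

/-- `U` is a hyperplane generic (transversal) to the arrangement `𝒜`: no element of
the intersection poset is contained in `U`, and for each `X ∈ L(𝒜)` of positive
dimension, `X ∩ U` is nonempty of dimension `dim X - 1`. -/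
def GenericTo (U : AffineSubspace ℂ (Vsp ℓ)) (𝒜 : Finset (AffineSubspace ℂ (Vsp ℓ))) : Prop :=
  IsHyperplaneIn ⊤ U ∧
    ∀ X ∈ interPoset ⊤ 𝒜, ¬X ≤ U ∧ (1 ≤ adim X → X ⊓ U ≠ ⊥ ∧ adim (X ⊓ U) + 1 = adim X)

/-- The Boolean arrangement in `ℂ^ℓ`, defined by `x₁ ⋯ x_ℓ = 0`:
the `ℓ` coordinate hyperplanes `{x i = 0}`. -/
def booleanArrangement (ℓ : ℕ) : Finset (AffineSubspace ℂ (Vsp ℓ)) :=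
  Finset.univ.image fun i : Fin ℓ =>
    (LinearMap.ker (LinearMap.proj i : Vsp ℓ →ₗ[ℂ] ℂ)).toAffineSubspace

end Arrangement

namespace Arrangement

variable {ℓ : ℕ}

lemma mem_interPoset {W X : AffineSubspace ℂ (Vsp ℓ)} {𝒜 : Finset (AffineSubspace ℂ (Vsp ℓ))} :
    X ∈ interPoset W 𝒜 ↔ (∃ I ⊆ 𝒜, W ⊓ I.inf id = X) ∧ X ≠ ⊥ := by
  simp [interPoset, Finset.mem_powerset]

lemma le_of_mem_interPoset {W X : AffineSubspace ℂ (Vsp ℓ)} {𝒜 : Finset (AffineSubspace ℂ (Vsp ℓ))}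
    (h : X ∈ interPoset W 𝒜) : X ≤ W := by
  obtain ⟨⟨I, hI, rfl⟩, -⟩ := mem_interPoset.1 h
  exact inf_le_left

lemma ne_bot_of_mem_interPoset {W X : AffineSubspace ℂ (Vsp ℓ)}
    {𝒜 : Finset (AffineSubspace ℂ (Vsp ℓ))} (h : X ∈ interPoset W 𝒜) : X ≠ ⊥ :=
  (mem_interPoset.1 h).2

lemma self_mem_interPoset {W : AffineSubspace ℂ (Vsp ℓ)} {𝒜 : Finset (AffineSubspace ℂ (Vsp ℓ))}
    (hW : W ≠ ⊥) : W ∈ interPoset W 𝒜 :=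
  mem_interPoset.2 ⟨⟨∅, by simp⟩, hW⟩

lemma adim_le_ambient (X : AffineSubspace ℂ (Vsp ℓ)) : adim X ≤ ℓ := by
  have := Submodule.finrank_le X.direction
  simpa [adim] using this

lemma adim_top : adim (⊤ : AffineSubspace ℂ (Vsp ℓ)) = ℓ := by
  rw [adim, AffineSubspace.direction_top]
  simp [finrank_top]

lemma adim_lt_adim {X Y : AffineSubspace ℂ (Vsp ℓ)} (h : X < Y) (hX : X ≠ ⊥) :
    adim X < adim Y := by
  have hne : (X : Set (Vsp ℓ)).Nonempty := by
    rwa [AffineSubspace.nonempty_iff_ne_bot]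
  exact Submodule.finrank_lt_finrank_of_lt (AffineSubspace.direction_lt_of_nonempty h hne)

lemma eq_of_le_of_adim_le {X Y : AffineSubspace ℂ (Vsp ℓ)} (h : X ≤ Y) (hX : X ≠ ⊥)
    (hd : adim Y ≤ adim X) : X = Y := by
  rcases eq_or_lt_of_le h with rfl | hlt
  · rfl
  · exact absurd (adim_lt_adim hlt hX) (by omega)

lemma mobiusFuel_self (W : AffineSubspace ℂ (Vsp ℓ)) (𝒜 : Finset (AffineSubspace ℂ (Vsp ℓ))) :
    ∀ n, mobiusFuel W 𝒜 n W = 1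
  | 0 => rfl
  | n + 1 => by rw [mobiusFuel, if_pos rfl]

lemma mobiusFuel_stable (W : AffineSubspace ℂ (Vsp ℓ)) (𝒜 : Finset (AffineSubspace ℂ (Vsp ℓ)))
    {n m : ℕ} {X : AffineSubspace ℂ (Vsp ℓ)} (hb : X ≠ ⊥) (hle : X ≤ W)
    (hn : adim W ≤ adim X + n) (hm : adim W ≤ adim X + m) :
    mobiusFuel W 𝒜 n X = mobiusFuel W 𝒜 m X := by
  induction n generalizing m X with
  | zero =>
    have hXW : X = W := eq_of_le_of_adim_le hle hb (by omega)
    subst hXW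
    rw [mobiusFuel_self, mobiusFuel_self]
  | succ n ih =>
    by_cases hXW : X = W
    · subst hXW; rw [mobiusFuel_self, mobiusFuel_self]
    · have hlt : adim X < adim W := adim_lt_adim (lt_of_le_of_ne hle hXW) hb
      obtain ⟨m', rfl⟩ : ∃ m', m = m' + 1 := ⟨m - 1, by omega⟩
      rw [mobiusFuel, mobiusFuel, if_neg hXW, if_neg hXW]
      congr 1
      refine Finset.sum_congr rfl fun Y hY => ?_
      rw [Finset.mem_filter] at hY
      obtain ⟨hYP, hXY⟩ := hY
      have hYb := ne_bot_of_mem_interPoset hYP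
      have hYW := le_of_mem_interPoset hYP
      have hd : adim X < adim Y := adim_lt_adim hXY hb
      exact ih hYb hYW (by omega) (by omega)

lemma mobius_eq_fuel (W : AffineSubspace ℂ (Vsp ℓ)) (𝒜 : Finset (AffineSubspace ℂ (Vsp ℓ)))
    {X : AffineSubspace ℂ (Vsp ℓ)} (hb : X ≠ ⊥) (hle : X ≤ W) {n : ℕ}
    (hn : adim W ≤ adim X + n) : mobius W 𝒜 X = mobiusFuel W 𝒜 n X :=
  mobiusFuel_stable W 𝒜 hb hle (le_trans (adim_le_ambient W) (Nat.le_add_left _ _)) hn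

lemma mobius_self (W : AffineSubspace ℂ (Vsp ℓ)) (𝒜 : Finset (AffineSubspace ℂ (Vsp ℓ))) :
    mobius W 𝒜 W = 1 := mobiusFuel_self W 𝒜 ℓ

lemma mobius_rec {W X : AffineSubspace ℂ (Vsp ℓ)} {𝒜 : Finset (AffineSubspace ℂ (Vsp ℓ))}
    (hX : X ∈ interPoset W 𝒜) (hne : X ≠ W) :
    mobius W 𝒜 X = - ∑ Y ∈ (interPoset W 𝒜).filter (fun Y => X < Y), mobius W 𝒜 Y := by
  have hb := ne_bot_of_mem_interPoset hX
  have hle := le_of_mem_interPoset hX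
  have hlt : adim X < adim W := adim_lt_adim (lt_of_le_of_ne hle hne) hb
  obtain ⟨d, hd⟩ : ∃ d, adim W - adim X = d + 1 := ⟨adim W - adim X - 1, by omega⟩
  rw [mobius_eq_fuel W 𝒜 hb hle (n := adim W - adim X) (by omega), hd, mobiusFuel, if_neg hne]
  congr 1
  refine Finset.sum_congr rfl fun Y hY => ?_
  rw [Finset.mem_filter] at hY
  obtain ⟨hYP, hXY⟩ := hY
  have hdY : adim X < adim Y := adim_lt_adim hXY hb
  exact (mobius_eq_fuel W 𝒜 (ne_bot_of_mem_interPoset hYP) (le_of_mem_interPoset hYP)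
    (by omega)).symm

lemma mobiusFuel_congr {W : AffineSubspace ℂ (Vsp ℓ)} {𝒜 𝒝 : Finset (AffineSubspace ℂ (Vsp ℓ))}
    (h : interPoset W 𝒜 = interPoset W 𝒝) : ∀ n X, mobiusFuel W 𝒜 n X = mobiusFuel W 𝒝 n X
  | 0, X => rfl
  | n + 1, X => by
    rw [mobiusFuel, mobiusFuel, h]
    exact if_congr Iff.rfl rfl (congrArg Neg.neg (Finset.sum_congr rfl fun Y _ =>
      mobiusFuel_congr h n Y))

lemma charPoly_congr {W : AffineSubspace ℂ (Vsp ℓ)} {𝒜 𝒝 : Finset (AffineSubspace ℂ (Vsp ℓ))}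
    (h : interPoset W 𝒜 = interPoset W 𝒝) : charPoly W 𝒜 = charPoly W 𝒝 := by
  unfold charPoly
  rw [h]
  exact Finset.sum_congr rfl fun X _ => by rw [mobius, mobius, mobiusFuel_congr h]

section DelRes

variable {𝒜 : Finset (AffineSubspace ℂ (Vsp ℓ))} {H : AffineSubspace ℂ (Vsp ℓ)}

/-- The intersection poset of the restriction equals the poset of
intersections `H ⊓ (⋂ I)`, `I ⊆ ℬ`. -/
lemma interPoset_restrictTo (ℬ : Finset (AffineSubspace ℂ (Vsp ℓ))) :
    interPoset H (restrictTo H ℬ) = interPoset H ℬ := by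
  ext X
  rw [mem_interPoset, mem_interPoset]
  constructor
  · rintro ⟨⟨J, hJ, rfl⟩, hXb⟩
    refine ⟨⟨ℬ.filter (fun K => K ⊓ H ∈ J), Finset.filter_subset _ _, ?_⟩, hXb⟩
    apply le_antisymm
    · refine le_inf inf_le_left (Finset.le_inf fun j hj => ?_)
      obtain ⟨hj', -⟩ := Finset.mem_filter.1 (hJ hj)
      obtain ⟨K, hK, rfl⟩ := Finset.mem_image.1 hj'
      have : K ∈ ℬ.filter (fun K => K ⊓ H ∈ J) := Finset.mem_filter.2 ⟨hK, hj⟩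
      calc H ⊓ (ℬ.filter (fun K => K ⊓ H ∈ J)).inf id ≤ H ⊓ K :=
            inf_le_inf_left H (Finset.inf_le this)
        _ = K ⊓ H := inf_comm H K
    · refine le_inf inf_le_left (Finset.le_inf fun K hK => ?_)
      obtain ⟨-, hKJ⟩ := Finset.mem_filter.1 hK
      have h1 : J.inf id ≤ K ⊓ H := Finset.inf_le hKJ
      exact le_trans inf_le_right (le_trans h1 inf_le_left)
  · rintro ⟨⟨I, hI, rfl⟩, hXb⟩
    refine ⟨⟨I.image (fun K => K ⊓ H), ?_, ?_⟩, hXb⟩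
    · intro j hj
      obtain ⟨K, hK, rfl⟩ := Finset.mem_image.1 hj
      refine Finset.mem_filter.2 ⟨Finset.mem_image.2 ⟨K, hI hK, rfl⟩, ?_⟩
      intro hbot
      refine hXb (le_bot_iff.1 ?_)
      rw [← hbot]
      exact le_inf (le_trans inf_le_right (Finset.inf_le hK)) inf_le_left
    · apply le_antisymm
      · refine le_inf inf_le_left (Finset.le_inf fun K hK => ?_)
        have : H ⊓ (I.image (fun K => K ⊓ H)).inf id ≤ K ⊓ H :=
          le_trans inf_le_right (Finset.inf_le (Finset.mem_image.2 ⟨K, hK, rfl⟩))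
        exact le_trans this inf_le_left
      · refine le_inf inf_le_left (Finset.le_inf fun j hj => ?_)
        obtain ⟨K, hK, rfl⟩ := Finset.mem_image.1 hj
        exact le_inf (le_trans inf_le_right (Finset.inf_le hK)) inf_le_left

lemma hyper_ne_top {K : AffineSubspace ℂ (Vsp ℓ)} (hK : IsHyperplaneIn ⊤ K) : K ≠ ⊤ := by
  intro h
  have := hK.2.2
  rw [h] at this
  omega

lemma hyper_eq_of_le (hhyp : ∀ K ∈ 𝒜, IsHyperplaneIn ⊤ K) (hH : H ∈ 𝒜)
    {K : AffineSubspace ℂ (Vsp ℓ)} (hK : K ∈ 𝒜) (h : H ≤ K) : K = H := by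
  have h1 := (hhyp H hH).2.2
  have h2 := (hhyp K hK).2.2
  exact (eq_of_le_of_adim_le h (hhyp H hH).2.1 (by omega)).symm

/-- `L(𝒜'') = {X ∈ L(𝒜) : X ≤ H}`. -/
lemma mem_interPoset_H (hH : H ∈ 𝒜) {X : AffineSubspace ℂ (Vsp ℓ)} :
    X ∈ interPoset H (𝒜.erase H) ↔ X ∈ interPoset ⊤ 𝒜 ∧ X ≤ H := by
  rw [mem_interPoset, mem_interPoset]
  constructor
  · rintro ⟨⟨I, hI, rfl⟩, hXb⟩
    refine ⟨⟨⟨insert H I, Finset.insert_subset hH (hI.trans (Finset.erase_subset _ _)), ?_⟩,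
      hXb⟩, inf_le_left⟩
    rw [Finset.inf_insert, top_inf_eq]
    rfl
  · rintro ⟨⟨⟨B, hB, rfl⟩, hXb⟩, hXH⟩
    refine ⟨⟨B.erase H, Finset.erase_subset_erase _ hB, ?_⟩, hXb⟩
    by_cases hHB : H ∈ B
    · have : H ⊓ (B.erase H).inf id = (insert H (B.erase H)).inf id := by
        rw [Finset.inf_insert]; rfl
      rw [this, Finset.insert_erase hHB, top_inf_eq]
    · rw [Finset.erase_eq_of_notMem hHB, top_inf_eq]
      rw [top_inf_eq] at hXH
      exact inf_eq_right.2 hXH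

lemma interPoset_erase_subset : interPoset ⊤ (𝒜.erase H) ⊆ interPoset ⊤ 𝒜 := by
  intro X hX
  obtain ⟨⟨I, hI, rfl⟩, hXb⟩ := mem_interPoset.1 hX
  exact mem_interPoset.2 ⟨⟨I, hI.trans (Finset.erase_subset _ _), rfl⟩, hXb⟩

lemma mem_interPoset_erase {X : AffineSubspace ℂ (Vsp ℓ)} (hX : X ∈ interPoset ⊤ 𝒜)
    (hXH : ¬ X ≤ H) : X ∈ interPoset ⊤ (𝒜.erase H) := by
  obtain ⟨⟨B, hB, rfl⟩, hXb⟩ := mem_interPoset.1 hX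
  refine mem_interPoset.2 ⟨⟨B, ?_, rfl⟩, hXb⟩
  refine fun K hK => Finset.mem_erase.2 ⟨fun hKH => hXH ?_, hB hK⟩
  exact le_trans inf_le_right (le_trans (Finset.inf_le hK) (le_of_eq hKH))

lemma filter_lt_erase {X : AffineSubspace ℂ (Vsp ℓ)} (hXH : ¬ X ≤ H) :
    (interPoset ⊤ 𝒜).filter (fun Y => X < Y) =
      (interPoset ⊤ (𝒜.erase H)).filter (fun Y => X < Y) := by
  ext Y
  rw [Finset.mem_filter, Finset.mem_filter]
  constructor
  · rintro ⟨hY, hXY⟩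
    exact ⟨mem_interPoset_erase hY (fun h => hXH (le_trans hXY.le h)), hXY⟩
  · rintro ⟨hY, hXY⟩
    exact ⟨interPoset_erase_subset hY, hXY⟩

/-- Deletion: μ agrees on elements not below `H`. -/
lemma mobiusFuel_deletion : ∀ (n : ℕ) (X : AffineSubspace ℂ (Vsp ℓ)),
    X ∈ interPoset ⊤ 𝒜 → ¬ X ≤ H →
    mobiusFuel ⊤ 𝒜 n X = mobiusFuel ⊤ (𝒜.erase H) n X
  | 0, X, _, _ => rfl
  | n + 1, X, hX, hXH => by
    rw [mobiusFuel, mobiusFuel]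
    by_cases hXtop : X = ⊤
    · rw [if_pos hXtop, if_pos hXtop]
    · rw [if_neg hXtop, if_neg hXtop, ← filter_lt_erase hXH]
      congr 1
      refine Finset.sum_congr rfl fun Y hY => ?_
      obtain ⟨hY', hXY⟩ := Finset.mem_filter.1 hY
      exact mobiusFuel_deletion n Y hY' (fun h => hXH (le_trans hXY.le h))

lemma mobius_deletion {X : AffineSubspace ℂ (Vsp ℓ)} (hX : X ∈ interPoset ⊤ 𝒜)
    (hXH : ¬ X ≤ H) : mobius ⊤ 𝒜 X = mobius ⊤ (𝒜.erase H) X :=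
  mobiusFuel_deletion ℓ X hX hXH

lemma top_ne_bot' : (⊤ : AffineSubspace ℂ (Vsp ℓ)) ≠ ⊥ := by
  intro h
  have : (0 : Vsp ℓ) ∈ (⊤ : AffineSubspace ℂ (Vsp ℓ)) := trivial
  rw [h] at this
  exact this

lemma H_notMem_erase_poset (hhyp : ∀ K ∈ 𝒜, IsHyperplaneIn ⊤ K) (hH : H ∈ 𝒜) :
    H ∉ interPoset ⊤ (𝒜.erase H) := by
  intro hmem
  obtain ⟨⟨I, hI, hIH⟩, hHb⟩ := mem_interPoset.1 hmem
  rcases I.eq_empty_or_nonempty with rfl | ⟨K, hK⟩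
  · simp only [Finset.inf_empty, inf_top_eq, top_inf_eq] at hIH
    exact hyper_ne_top (hhyp H hH) hIH.symm
  · have hHK : H ≤ K := by
      rw [← hIH]; exact le_trans inf_le_right (Finset.inf_le hK)
    have hKA : K ∈ 𝒜 := (Finset.erase_subset _ _) (hI hK)
    have := hyper_eq_of_le hhyp hH hKA hHK
    exact (Finset.mem_erase.1 (hI hK)).1 this

lemma H_mem_poset (hH : H ∈ 𝒜) (hHb : H ≠ ⊥) : H ∈ interPoset ⊤ 𝒜 :=
  mem_interPoset.2 ⟨⟨{H}, Finset.singleton_subset_iff.2 hH, by simp⟩, hHb⟩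

lemma filter_lt_H (hhyp : ∀ K ∈ 𝒜, IsHyperplaneIn ⊤ K) (hH : H ∈ 𝒜) :
    (interPoset ⊤ 𝒜).filter (fun Y => H < Y) = {⊤} := by
  ext Y
  rw [Finset.mem_filter, Finset.mem_singleton]
  constructor
  · rintro ⟨hY, hHY⟩
    obtain ⟨⟨B, hB, rfl⟩, hYb⟩ := mem_interPoset.1 hY
    rcases B.eq_empty_or_nonempty with rfl | ⟨K, hK⟩
    · simp
    · exfalso
      have h1 : (⊤ : AffineSubspace ℂ (Vsp ℓ)) ⊓ B.inf id ≤ K :=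
        le_trans inf_le_right (Finset.inf_le hK)
      have hHK : H ≤ K := le_trans hHY.le h1
      have hKH := hyper_eq_of_le hhyp hH (hB hK) hHK
      exact not_le_of_gt hHY (hKH ▸ h1)
  · rintro rfl
    exact ⟨self_mem_interPoset top_ne_bot', lt_of_le_of_ne le_top (hyper_ne_top (hhyp H hH))⟩

lemma mobius_H (hhyp : ∀ K ∈ 𝒜, IsHyperplaneIn ⊤ K) (hH : H ∈ 𝒜) :
    mobius ⊤ 𝒜 H = -1 := by
  rw [mobius_rec (H_mem_poset hH (hhyp H hH).2.1) (hyper_ne_top (hhyp H hH)),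
    filter_lt_H hhyp hH, Finset.sum_singleton, mobius_self]

/-- Interval sum identity: for `S ≠ ⊥` lying on some hyperplane of `ℬ`,
`∑_{Y ∈ L(ℬ), Y ⊇ S} μ(Y) = 0`. -/
lemma sum_mobius_upper (ℬ : Finset (AffineSubspace ℂ (Vsp ℓ)))
    (hbhyp : ∀ K ∈ ℬ, IsHyperplaneIn ⊤ K) {S : AffineSubspace ℂ (Vsp ℓ)} (hS : S ≠ ⊥)
    {K₀ : AffineSubspace ℂ (Vsp ℓ)} (hK₀ : K₀ ∈ ℬ) (hSK : S ≤ K₀) :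
    ∑ Y ∈ (interPoset ⊤ ℬ).filter (fun Y => S ≤ Y), mobius ⊤ ℬ Y = 0 := by
  set Z : AffineSubspace ℂ (Vsp ℓ) := ⊤ ⊓ (ℬ.filter (fun K => S ≤ K)).inf id with hZdef
  have hSZ : S ≤ Z :=
    le_inf le_top (Finset.le_inf fun K hK => (Finset.mem_filter.1 hK).2)
  have hZb : Z ≠ ⊥ := fun h => hS (le_bot_iff.1 (h ▸ hSZ))
  have hZ : Z ∈ interPoset ⊤ ℬ :=
    mem_interPoset.2 ⟨⟨ℬ.filter (fun K => S ≤ K), Finset.filter_subset _ _, rfl⟩, hZb⟩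
  have hZK₀ : Z ≤ K₀ :=
    le_trans inf_le_right (Finset.inf_le (Finset.mem_filter.2 ⟨hK₀, hSK⟩))
  have hZtop : Z ≠ ⊤ := fun h => hyper_ne_top (hbhyp K₀ hK₀) (top_le_iff.1 (h ▸ hZK₀))
  have hset : (interPoset ⊤ ℬ).filter (fun Y => S ≤ Y) =
      (interPoset ⊤ ℬ).filter (fun Y => Z ≤ Y) := by
    ext Y
    rw [Finset.mem_filter, Finset.mem_filter]
    constructor
    · rintro ⟨hY, hSY⟩
      obtain ⟨⟨B, hB, rfl⟩, hYb⟩ := mem_interPoset.1 hY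
      refine ⟨hY, le_inf le_top (Finset.le_inf fun K hK => ?_)⟩
      have : S ≤ K := le_trans hSY (le_trans inf_le_right (Finset.inf_le hK))
      exact le_trans inf_le_right (Finset.inf_le (Finset.mem_filter.2 ⟨hB hK, this⟩))
    · rintro ⟨hY, hZY⟩
      exact ⟨hY, le_trans hSZ hZY⟩
  have hset2 : (interPoset ⊤ ℬ).filter (fun Y => Z ≤ Y) =
      insert Z ((interPoset ⊤ ℬ).filter (fun Y => Z < Y)) := by
    ext Y
    rw [Finset.mem_insert, Finset.mem_filter, Finset.mem_filter]
    constructor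
    · rintro ⟨hY, hZY⟩
      rcases eq_or_lt_of_le hZY with rfl | hlt
      · exact Or.inl rfl
      · exact Or.inr ⟨hY, hlt⟩
    · rintro (rfl | ⟨hY, hlt⟩)
      · exact ⟨hZ, le_refl _⟩
      · exact ⟨hY, hlt.le⟩
  rw [hset, hset2, Finset.sum_insert (by simp), mobius_rec hZ hZtop]
  ring

/-- Restriction: `μ''(X) = μ'(X)·[X ∈ L'] − μ(X)` for `X ∈ L''`. -/
lemma mobius_restriction (hhyp : ∀ K ∈ 𝒜, IsHyperplaneIn ⊤ K) (hH : H ∈ 𝒜) :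
    ∀ X ∈ interPoset H (𝒜.erase H),
      mobius H (𝒜.erase H) X =
        (if X ∈ interPoset ⊤ (𝒜.erase H) then mobius ⊤ (𝒜.erase H) X else 0)
          - mobius ⊤ 𝒜 X := by
  have hbase : mobius H (𝒜.erase H) H =
      (if H ∈ interPoset ⊤ (𝒜.erase H) then mobius ⊤ (𝒜.erase H) H else 0)
        - mobius ⊤ 𝒜 H := by
    rw [mobius_self, if_neg (H_notMem_erase_poset hhyp hH), mobius_H hhyp hH]
    ring
  suffices haux : ∀ (k : ℕ) (X : AffineSubspace ℂ (Vsp ℓ)), X ∈ interPoset H (𝒜.erase H) →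
      adim H ≤ adim X + k →
      mobius H (𝒜.erase H) X =
        (if X ∈ interPoset ⊤ (𝒜.erase H) then mobius ⊤ (𝒜.erase H) X else 0)
          - mobius ⊤ 𝒜 X by
    exact fun X hX => haux (adim H) X hX (Nat.le_add_left _ _)
  intro k
  induction k with
  | zero =>
    intro X hX hk
    have hXH : X = H := eq_of_le_of_adim_le (le_of_mem_interPoset hX)
      (ne_bot_of_mem_interPoset hX) (by omega)
    subst hXH
    exact hbase
  | succ k ih =>
    intro X hX hk
    by_cases hXH : X = H
    · subst hXH; exact hbase
    have hXW : X ≤ H := le_of_mem_interPoset hX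
    have hXb : X ≠ ⊥ := ne_bot_of_mem_interPoset hX
    have hXL : X ∈ interPoset ⊤ 𝒜 := ((mem_interPoset_H hH).1 hX).1
    have hXlt : adim X < adim H := adim_lt_adim (lt_of_le_of_ne hXW hXH) hXb
    have hXtop : X ≠ ⊤ := fun h => hyper_ne_top (hhyp H hH) (top_le_iff.1 (h ▸ hXW))
    obtain ⟨⟨I, hI, hIX⟩, -⟩ := mem_interPoset.1 hX
    obtain ⟨K₀, hK₀⟩ : I.Nonempty := by
      rcases I.eq_empty_or_nonempty with rfl | h
      · exfalso; apply hXH; rw [← hIX]; simp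
      · exact h
    have hK₀A : K₀ ∈ 𝒜.erase H := hI hK₀
    have hXK₀ : X ≤ K₀ := by
      rw [← hIX]; exact le_trans inf_le_right (Finset.inf_le hK₀)
    -- Step 1: recursion for μ'' plus the inductive hypothesis
    have h1 : mobius H (𝒜.erase H) X =
        -(∑ Y ∈ (interPoset H (𝒜.erase H)).filter (fun Y => X < Y),
            ((if Y ∈ interPoset ⊤ (𝒜.erase H) then mobius ⊤ (𝒜.erase H) Y else 0)
              - mobius ⊤ 𝒜 Y)) := by
      rw [mobius_rec hX hXH]
      congr 1
      refine Finset.sum_congr rfl fun Y hY => ?_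
      obtain ⟨hY', hXY⟩ := Finset.mem_filter.1 hY
      have : adim X < adim Y := adim_lt_adim hXY hXb
      exact ih Y hY' (by omega)
    rw [Finset.sum_sub_distrib] at h1
    -- Step 2: recursion for μ, split by `≤ H`
    have hseteq1 : ((interPoset ⊤ 𝒜).filter (fun Y => X < Y)).filter (fun Y => Y ≤ H) =
        (interPoset H (𝒜.erase H)).filter (fun Y => X < Y) := by
      ext Y
      simp only [Finset.mem_filter, mem_interPoset_H hH]
      tauto
    have hseteq2 : ((interPoset ⊤ 𝒜).filter (fun Y => X < Y)).filter (fun Y => ¬ Y ≤ H) =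
        ((interPoset ⊤ (𝒜.erase H)).filter (fun Y => X < Y)).filter (fun Y => ¬ Y ≤ H) := by
      ext Y
      simp only [Finset.mem_filter]
      constructor
      · rintro ⟨⟨hY, hXY⟩, hYH⟩
        exact ⟨⟨mem_interPoset_erase hY hYH, hXY⟩, hYH⟩
      · rintro ⟨⟨hY, hXY⟩, hYH⟩
        exact ⟨⟨interPoset_erase_subset hY, hXY⟩, hYH⟩
    have h2 : mobius ⊤ 𝒜 X =
        -((∑ Y ∈ (interPoset H (𝒜.erase H)).filter (fun Y => X < Y), mobius ⊤ 𝒜 Y)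
          + ∑ Y ∈ ((interPoset ⊤ (𝒜.erase H)).filter (fun Y => X < Y)).filter
              (fun Y => ¬ Y ≤ H), mobius ⊤ (𝒜.erase H) Y) := by
      rw [mobius_rec hXL hXtop]
      congr 1
      rw [← Finset.sum_filter_add_sum_filter_not ((interPoset ⊤ 𝒜).filter (fun Y => X < Y))
        (fun Y => Y ≤ H) (mobius ⊤ 𝒜), hseteq1, hseteq2]
      congr 1
      refine Finset.sum_congr rfl fun Y hY => ?_
      obtain ⟨hY1, hYH⟩ := Finset.mem_filter.1 hY
      obtain ⟨hY2, hXY⟩ := Finset.mem_filter.1 hY1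
      exact mobius_deletion (interPoset_erase_subset hY2) hYH
    -- Step 3: interval-sum identity in L'
    have hzero : ∑ Y ∈ (interPoset ⊤ (𝒜.erase H)).filter (fun Y => X ≤ Y),
        mobius ⊤ (𝒜.erase H) Y = 0 :=
      sum_mobius_upper (𝒜.erase H) (fun K hK => hhyp K (Finset.erase_subset _ _ hK)) hXb
        hK₀A hXK₀
    have hsplitle : (interPoset ⊤ (𝒜.erase H)).filter (fun Y => X ≤ Y) =
        ((interPoset ⊤ (𝒜.erase H)).filter (fun Y => X < Y)) ∪
          ((interPoset ⊤ (𝒜.erase H)).filter (fun Y => X = Y)) := by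
      ext Y
      simp only [Finset.mem_filter, Finset.mem_union]
      constructor
      · rintro ⟨hY, hle⟩
        rcases eq_or_lt_of_le hle with h | h
        · exact Or.inr ⟨hY, h⟩
        · exact Or.inl ⟨hY, h⟩
      · rintro (⟨hY, h⟩ | ⟨hY, h⟩)
        · exact ⟨hY, h.le⟩
        · exact ⟨hY, le_of_eq h⟩
    have hdisj : Disjoint ((interPoset ⊤ (𝒜.erase H)).filter (fun Y => X < Y))
        ((interPoset ⊤ (𝒜.erase H)).filter (fun Y => X = Y)) := by
      rw [Finset.disjoint_left]
      rintro Y hY1 hY2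
      obtain ⟨-, h1⟩ := Finset.mem_filter.1 hY1
      obtain ⟨-, h2⟩ := Finset.mem_filter.1 hY2
      exact absurd (h2 ▸ h1) (lt_irrefl X)
    have hmx : ∑ Y ∈ (interPoset ⊤ (𝒜.erase H)).filter (fun Y => X = Y),
        mobius ⊤ (𝒜.erase H) Y =
        (if X ∈ interPoset ⊤ (𝒜.erase H) then mobius ⊤ (𝒜.erase H) X else 0) := by
      rw [Finset.filter_eq]
      by_cases h : X ∈ interPoset ⊤ (𝒜.erase H) <;> simp [h]
    have hstrict : ∑ Y ∈ (interPoset ⊤ (𝒜.erase H)).filter (fun Y => X < Y),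
        mobius ⊤ (𝒜.erase H) Y =
        (∑ Y ∈ ((interPoset ⊤ (𝒜.erase H)).filter (fun Y => X < Y)).filter (fun Y => Y ≤ H),
          mobius ⊤ (𝒜.erase H) Y)
        + ∑ Y ∈ ((interPoset ⊤ (𝒜.erase H)).filter (fun Y => X < Y)).filter (fun Y => ¬ Y ≤ H),
          mobius ⊤ (𝒜.erase H) Y :=
      (Finset.sum_filter_add_sum_filter_not _ _ _).symm
    have hc : ∑ Y ∈ (interPoset H (𝒜.erase H)).filter (fun Y => X < Y),
        (if Y ∈ interPoset ⊤ (𝒜.erase H) then mobius ⊤ (𝒜.erase H) Y else 0) =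
        ∑ Y ∈ ((interPoset ⊤ (𝒜.erase H)).filter (fun Y => X < Y)).filter (fun Y => Y ≤ H),
          mobius ⊤ (𝒜.erase H) Y := by
      rw [← Finset.sum_filter]
      congr 1
      ext Y
      simp only [Finset.mem_filter, mem_interPoset_H hH]
      constructor
      · rintro ⟨⟨⟨hYL, hYH⟩, hXY⟩, hY'⟩
        exact ⟨⟨hY', hXY⟩, hYH⟩
      · rintro ⟨⟨hY', hXY⟩, hYH⟩
        exact ⟨⟨⟨interPoset_erase_subset hY', hYH⟩, hXY⟩, hY'⟩
    rw [hsplitle, Finset.sum_union hdisj, hstrict, hmx] at hzero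
    rw [hc] at h1
    linarith [h1, h2, hzero]

end DelRes

end Arrangement

open Arrangement in
/-- **Deletion–restriction.** For `H ∈ 𝒜`, with `𝒜' = 𝒜 \ {H}` and
`𝒜'' = 𝒜' ∩ H` (an arrangement in `H`), one has `χ(𝒜,t) = χ(𝒜',t) - χ(𝒜'',t)`. -/
theorem deletion_restriction (ℓ : ℕ) (𝒜 : Finset (AffineSubspace ℂ (Vsp ℓ)))
    (hhyp : ∀ K ∈ 𝒜, IsHyperplaneIn ⊤ K) (H : AffineSubspace ℂ (Vsp ℓ)) (hH : H ∈ 𝒜) :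
    charPoly ⊤ 𝒜 = charPoly ⊤ (𝒜.erase H) - charPoly H (restrictTo H (𝒜.erase H)) := by
  classical
  have hA : (interPoset ⊤ 𝒜).filter (fun Y => Y ≤ H) = interPoset H (𝒜.erase H) := by
    ext Y
    simp only [Finset.mem_filter, mem_interPoset_H hH]
  have hB : (interPoset ⊤ 𝒜).filter (fun Y => ¬ Y ≤ H)
      = (interPoset ⊤ (𝒜.erase H)).filter (fun Y => ¬ Y ≤ H) := by
    ext Y
    simp only [Finset.mem_filter]
    constructor
    · rintro ⟨hY, hYH⟩; exact ⟨mem_interPoset_erase hY hYH, hYH⟩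
    · rintro ⟨hY, hYH⟩; exact ⟨interPoset_erase_subset hY, hYH⟩
  have hLsplit : charPoly ⊤ 𝒜
      = (∑ Y ∈ interPoset H (𝒜.erase H),
          C (mobius ⊤ 𝒜 Y) * (Polynomial.X : Polynomial ℤ) ^ adim Y)
        + ∑ Y ∈ (interPoset ⊤ 𝒜).filter (fun Y => ¬ Y ≤ H),
            C (mobius ⊤ 𝒜 Y) * (Polynomial.X : Polynomial ℤ) ^ adim Y := by
    unfold charPoly
    rw [← Finset.sum_filter_add_sum_filter_not (interPoset ⊤ 𝒜) (fun Y => Y ≤ H), hA]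
  have hS2 : ∑ Y ∈ (interPoset ⊤ 𝒜).filter (fun Y => ¬ Y ≤ H),
      C (mobius ⊤ 𝒜 Y) * (Polynomial.X : Polynomial ℤ) ^ adim Y
      = ∑ Y ∈ (interPoset ⊤ (𝒜.erase H)).filter (fun Y => ¬ Y ≤ H),
          C (mobius ⊤ (𝒜.erase H) Y) * (Polynomial.X : Polynomial ℤ) ^ adim Y := by
    rw [hB]
    refine Finset.sum_congr rfl fun Y hY => ?_
    obtain ⟨hY', hYH⟩ := Finset.mem_filter.1 hY
    rw [mobius_deletion (interPoset_erase_subset hY') hYH]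
  have hM : ∑ Y ∈ interPoset H (𝒜.erase H),
      C (if Y ∈ interPoset ⊤ (𝒜.erase H) then mobius ⊤ (𝒜.erase H) Y else 0)
        * (Polynomial.X : Polynomial ℤ) ^ adim Y
      = ∑ Y ∈ (interPoset ⊤ (𝒜.erase H)).filter (fun Y => Y ≤ H),
          C (mobius ⊤ (𝒜.erase H) Y) * (Polynomial.X : Polynomial ℤ) ^ adim Y := by
    have e1 : ∀ Y ∈ interPoset H (𝒜.erase H),
        C (if Y ∈ interPoset ⊤ (𝒜.erase H) then mobius ⊤ (𝒜.erase H) Y else 0)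
          * (Polynomial.X : Polynomial ℤ) ^ adim Y
        = if Y ∈ interPoset ⊤ (𝒜.erase H) then
            C (mobius ⊤ (𝒜.erase H) Y) * (Polynomial.X : Polynomial ℤ) ^ adim Y else 0 := by
      intro Y _
      split_ifs <;> simp
    rw [Finset.sum_congr rfl e1, ← Finset.sum_filter]
    congr 1
    ext Y
    simp only [Finset.mem_filter, mem_interPoset_H hH]
    constructor
    · rintro ⟨⟨hYL, hYH⟩, hY'⟩
      exact ⟨hY', hYH⟩
    · rintro ⟨hY', hYH⟩
      exact ⟨⟨interPoset_erase_subset hY', hYH⟩, hY'⟩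
  have hchi' : charPoly ⊤ (𝒜.erase H)
      = (∑ Y ∈ (interPoset ⊤ (𝒜.erase H)).filter (fun Y => Y ≤ H),
          C (mobius ⊤ (𝒜.erase H) Y) * (Polynomial.X : Polynomial ℤ) ^ adim Y)
        + ∑ Y ∈ (interPoset ⊤ (𝒜.erase H)).filter (fun Y => ¬ Y ≤ H),
            C (mobius ⊤ (𝒜.erase H) Y) * (Polynomial.X : Polynomial ℤ) ^ adim Y := by
    unfold charPoly
    exact (Finset.sum_filter_add_sum_filter_not _ _ _).symm
  have hchi'' : charPoly H (restrictTo H (𝒜.erase H))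
      = (∑ Y ∈ interPoset H (𝒜.erase H),
          C (if Y ∈ interPoset ⊤ (𝒜.erase H) then mobius ⊤ (𝒜.erase H) Y else 0)
            * (Polynomial.X : Polynomial ℤ) ^ adim Y)
        - ∑ Y ∈ interPoset H (𝒜.erase H),
            C (mobius ⊤ 𝒜 Y) * (Polynomial.X : Polynomial ℤ) ^ adim Y := by
    rw [charPoly_congr (interPoset_restrictTo (𝒜.erase H))]
    unfold charPoly
    rw [← Finset.sum_sub_distrib]
    refine Finset.sum_congr rfl fun Y hY => ?_
    rw [mobius_restriction hhyp hH Y hY, map_sub, sub_mul]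
  rw [hLsplit, hS2, hchi', hchi'', hM]
  ring
end
end

section
/- If U is a hyperplane generic to an arrangement A in C^ℓ, then χ(A ∩ U, t) = (χ(A, t) − χ(A, 0)) / t. -/
open Polynomial
open scoped Classical
noncomputable section

namespace Arrangement

variable {ℓ : ℕ}

section AuxProof

lemma adim_lt_of_lt {X Y : AffineSubspace ℂ (Vsp ℓ)} (hX : X ≠ ⊥) (h : X < Y) :
    adim X < adim Y := by
  have hd : X.direction ≤ Y.direction := AffineSubspace.direction_le h.le
  have hd' : X.direction < Y.direction := by
    rcases hd.lt_or_eq with h' | h'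
    · exact h'
    · exfalso
      obtain ⟨p, hp⟩ := (AffineSubspace.nonempty_iff_ne_bot X).mpr hX
      exact h.ne (AffineSubspace.ext_of_direction_eq h' ⟨p, hp, h.le hp⟩)
  exact Submodule.finrank_lt_finrank_of_lt hd'

lemma eq_of_le_of_adim_eq {X Y : AffineSubspace ℂ (Vsp ℓ)} (hX : X ≠ ⊥) (h : X ≤ Y)
    (hd : adim X = adim Y) : X = Y := by
  rcases h.lt_or_eq with h' | h'
  · exact absurd hd (adim_lt_of_lt hX h').ne
  · exact h'

lemma adim_le_of_le {X Y : AffineSubspace ℂ (Vsp ℓ)} (hX : X ≠ ⊥) (h : X ≤ Y) :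
    adim X ≤ adim Y := by
  rcases h.lt_or_eq with h' | h'
  · exact (adim_lt_of_lt hX h').le
  · exact h' ▸ le_rfl

lemma le_of_adim_eq_zero {X U : AffineSubspace ℂ (Vsp ℓ)} (h0 : adim X = 0)
    (h : X ⊓ U ≠ ⊥) : X ≤ U := by
  obtain ⟨p, hp⟩ := (AffineSubspace.nonempty_iff_ne_bot _).mpr h
  have hd : X.direction = ⊥ := Submodule.finrank_eq_zero.mp h0
  intro q hq
  have hv := AffineSubspace.vsub_mem_direction hq hp.1
  rw [hd, Submodule.mem_bot] at hv
  have : q = p := by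
    have := vsub_eq_zero_iff_eq.mp hv
    exact this
  exact this ▸ hp.2

lemma inf_mem_interPoset {W X Y : AffineSubspace ℂ (Vsp ℓ)}
    {𝒜 : Finset (AffineSubspace ℂ (Vsp ℓ))} (hX : X ∈ interPoset W 𝒜)
    (hY : Y ∈ interPoset W 𝒜) (h : X ⊓ Y ≠ ⊥) : X ⊓ Y ∈ interPoset W 𝒜 := by
  obtain ⟨⟨I, hI, hIX⟩, -⟩ := mem_interPoset.mp hX
  obtain ⟨⟨J, hJ, hJY⟩, -⟩ := mem_interPoset.mp hY
  refine mem_interPoset.mpr ⟨⟨I ∪ J, Finset.union_subset hI hJ, ?_⟩, h⟩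
  rw [Finset.inf_union, inf_inf_distrib_left, hIX, hJY]

lemma top_mem_interPoset {𝒜 : Finset (AffineSubspace ℂ (Vsp ℓ))} :
    (⊤ : AffineSubspace ℂ (Vsp ℓ)) ∈ interPoset ⊤ 𝒜 := by
  refine mem_interPoset.mpr ⟨⟨∅, by simp, by simp⟩, ?_⟩
  simp [← AffineSubspace.nonempty_iff_ne_bot]

lemma inf_inf_le (U : AffineSubspace ℂ (Vsp ℓ)) {α : Type*} (I : Finset α)
    (f g : α → AffineSubspace ℂ (Vsp ℓ)) (h : ∀ K ∈ I, f K ⊓ U ≤ g K) :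
    U ⊓ I.inf f ≤ U ⊓ I.inf g :=
  le_inf inf_le_left (Finset.le_inf fun K hK =>
    (le_inf (inf_le_right.trans (Finset.inf_le hK)) inf_le_left).trans (h K hK))

lemma inf_inf_congr (U : AffineSubspace ℂ (Vsp ℓ)) {α : Type*} (I : Finset α)
    (f g : α → AffineSubspace ℂ (Vsp ℓ)) (h : ∀ K ∈ I, f K ⊓ U = g K ⊓ U) :
    U ⊓ I.inf f = U ⊓ I.inf g :=
  le_antisymm (inf_inf_le U I f g fun K hK => (h K hK).le.trans inf_le_left)
    (inf_inf_le U I g f fun K hK => (h K hK).ge.trans inf_le_left)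


section Generic
variable {𝒜 : Finset (AffineSubspace ℂ (Vsp ℓ))} {U : AffineSubspace ℂ (Vsp ℓ)}

lemma map_mem (hU : GenericTo U 𝒜) {X : AffineSubspace ℂ (Vsp ℓ)}
    (hX : X ∈ interPoset ⊤ 𝒜) (h1 : 1 ≤ adim X) :
    X ⊓ U ∈ interPoset U (restrictTo U 𝒜) := by
  obtain ⟨⟨I, hI𝒜, hIX⟩, hXbot⟩ := mem_interPoset.mp hX
  have hXU := (hU.2 X hX).2 h1
  refine mem_interPoset.mpr ⟨⟨I.image (fun H => H ⊓ U), ?_, ?_⟩, hXU.1⟩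
  · intro K hK
    obtain ⟨H, hH, rfl⟩ := Finset.mem_image.mp hK
    have hle : X ⊓ U ≤ H ⊓ U := by
      refine inf_le_inf_right U ?_
      rw [← hIX]
      exact inf_le_right.trans (Finset.inf_le hH)
    have hb : H ⊓ U ≠ ⊥ := fun hb => hXU.1 (le_bot_iff.mp (hb ▸ hle))
    exact Finset.mem_filter.mpr ⟨Finset.mem_image.mpr ⟨H, hI𝒜 hH, rfl⟩, hb⟩
  · rw [Finset.inf_image]
    have : U ⊓ I.inf (id ∘ fun H => H ⊓ U) = U ⊓ I.inf id := by
      apply inf_inf_congr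
      intro K hK
      simp [inf_assoc]
    rw [this, ← hIX, top_inf_eq, inf_comm]

lemma surj_mem (hU : GenericTo U 𝒜) {Y' : AffineSubspace ℂ (Vsp ℓ)}
    (hY' : Y' ∈ interPoset U (restrictTo U 𝒜)) :
    ∃ X ∈ interPoset ⊤ 𝒜, 1 ≤ adim X ∧ X ⊓ U = Y' := by
  obtain ⟨⟨I', hI', hIY⟩, hYbot⟩ := mem_interPoset.mp hY'
  have hpre : ∀ K ∈ I', ∃ H ∈ 𝒜, H ⊓ U = K := by
    intro K hK
    have := Finset.mem_filter.mp (hI' hK)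
    obtain ⟨H, hH, rfl⟩ := Finset.mem_image.mp this.1
    exact ⟨H, hH, rfl⟩
  choose f hf𝒜 hfK using hpre
  set J : Finset (AffineSubspace ℂ (Vsp ℓ)) := I'.attach.image (fun K => f K.1 K.2) with hJ
  have hJ𝒜 : J ⊆ 𝒜 := by
    intro H hH
    obtain ⟨K, -, rfl⟩ := Finset.mem_image.mp hH
    exact hf𝒜 K.1 K.2
  set X : AffineSubspace ℂ (Vsp ℓ) := ⊤ ⊓ J.inf id with hXdef
  have hXJ : X = J.inf id := by rw [hXdef, top_inf_eq]
  have hXU : X ⊓ U = Y' := by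
    rw [hXJ, hJ, Finset.inf_image, inf_comm]
    have h1 : U ⊓ I'.attach.inf (id ∘ fun K => f K.1 K.2) =
        U ⊓ I'.attach.inf (fun K => (K : AffineSubspace ℂ (Vsp ℓ))) := by
      apply inf_inf_congr
      intro K hK
      have h2 : (K : AffineSubspace ℂ (Vsp ℓ)) ⊓ U = (K : AffineSubspace ℂ (Vsp ℓ)) := by
        rw [inf_eq_left, ← hfK K.1 K.2]
        exact inf_le_right
      simp only [Function.comp, id]
      rw [hfK K.1 K.2, h2]
    rw [h1, ← hIY]
    congr 1
    have := Finset.inf_attach I' (id : AffineSubspace ℂ (Vsp ℓ) → AffineSubspace ℂ (Vsp ℓ))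
    simpa using this
  have hXbot : X ≠ ⊥ := by
    intro hb
    apply hYbot
    rw [← hXU, hb, bot_inf_eq]
  have hXL : X ∈ interPoset ⊤ 𝒜 := mem_interPoset.mpr ⟨⟨J, hJ𝒜, rfl⟩, hXbot⟩
  refine ⟨X, hXL, ?_, hXU⟩
  by_contra h0
  push_neg at h0
  interval_cases h : adim X
  all_goals exact (hU.2 X hXL).1 (le_of_adim_eq_zero (by omega) (hXU ▸ hYbot))

lemma le_of_infU_le (hU : GenericTo U 𝒜) {X Y : AffineSubspace ℂ (Vsp ℓ)}
    (hX : X ∈ interPoset ⊤ 𝒜) (hY : Y ∈ interPoset ⊤ 𝒜) (h1 : 1 ≤ adim X)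
    (h : X ⊓ U ≤ Y) : X ≤ Y := by
  have hXU := (hU.2 X hX).2 h1
  have hZbot : X ⊓ Y ≠ ⊥ := by
    intro hb
    exact hXU.1 (le_bot_iff.mp (hb ▸ le_inf inf_le_left h))
  have hZL : X ⊓ Y ∈ interPoset ⊤ 𝒜 := inf_mem_interPoset hX hY hZbot
  rcases eq_or_lt_of_le (inf_le_left : X ⊓ Y ≤ X) with hZX | hZX
  · rw [← hZX]; exact inf_le_right
  · exfalso
    have h2 : adim (X ⊓ Y) < adim X := adim_lt_of_lt hZbot hZX
    have h3 : adim (X ⊓ U) ≤ adim (X ⊓ Y) :=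
      adim_le_of_le hXU.1 (le_inf inf_le_left h)
    have h4 : adim (X ⊓ U) = adim (X ⊓ Y) := by omega
    have h5 : X ⊓ U = X ⊓ Y := eq_of_le_of_adim_eq hXU.1 (le_inf inf_le_left h) h4
    exact (hU.2 _ hZL).1 (h5 ▸ inf_le_right)

lemma inj_infU (hU : GenericTo U 𝒜) {X Y : AffineSubspace ℂ (Vsp ℓ)}
    (hX : X ∈ interPoset ⊤ 𝒜) (hY : Y ∈ interPoset ⊤ 𝒜) (h1 : 1 ≤ adim X)
    (h1' : 1 ≤ adim Y) (h : X ⊓ U = Y ⊓ U) : X = Y :=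
  le_antisymm (le_of_infU_le hU hX hY h1 (h.le.trans inf_le_left))
    (le_of_infU_le hU hY hX h1' (h.ge.trans inf_le_left))

lemma eq_top_of_U_le (hhyp : ∀ H ∈ 𝒜, IsHyperplaneIn ⊤ H) (hU : GenericTo U 𝒜)
    {X : AffineSubspace ℂ (Vsp ℓ)} (hX : X ∈ interPoset ⊤ 𝒜) (h : U ≤ X) : X = ⊤ := by
  obtain ⟨⟨I, hI𝒜, hIX⟩, hXbot⟩ := mem_interPoset.mp hX
  rcases I.eq_empty_or_nonempty with rfl | ⟨H, hH⟩
  · simpa using hIX.symm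
  · exfalso
    have hH𝒜 := hI𝒜 hH
    have hhH := hhyp H hH𝒜
    have hUH : U ≤ H := h.trans (by rw [← hIX]; exact inf_le_right.trans (Finset.inf_le hH))
    have hadim : adim U = adim H := by
      have := hU.1.2.2
      have := hhH.2.2
      omega
    have hUeq : U = H := eq_of_le_of_adim_eq hU.1.2.1 hUH hadim
    have hHL : H ∈ interPoset ⊤ 𝒜 := by
      refine mem_interPoset.mpr ⟨⟨{H}, by simpa, by simp⟩, hhH.2.1⟩
    exact (hU.2 H hHL).1 hUeq.ge


lemma mobiusFuel_restrict (hhyp : ∀ H ∈ 𝒜, IsHyperplaneIn ⊤ H) (hU : GenericTo U 𝒜) :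
    ∀ n, ∀ X ∈ interPoset ⊤ 𝒜, 1 ≤ adim X →
      mobiusFuel U (restrictTo U 𝒜) n (X ⊓ U) = mobiusFuel ⊤ 𝒜 n X := by
  intro n
  induction n with
  | zero => intro X _ _; rfl
  | succ n ih =>
    intro X hX h1
    simp only [mobiusFuel]
    by_cases hXtop : X = ⊤
    · subst hXtop
      rw [if_pos (top_inf_eq U), if_pos rfl]
    · have hXUne : X ⊓ U ≠ U := fun h =>
        hXtop (eq_top_of_U_le hhyp hU hX (h ▸ (inf_le_left : X ⊓ U ≤ X)))
      rw [if_neg hXUne, if_neg hXtop, neg_inj]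
      refine (Finset.sum_bij (fun Y _ => Y ⊓ U) ?_ ?_ ?_ ?_).symm
      · intro Y hY
        obtain ⟨hYL, hXY⟩ := Finset.mem_filter.mp hY
        have hY1 : 1 ≤ adim Y := by
          have := adim_lt_of_lt (ne_bot_of_mem_interPoset hX) hXY
          omega
        refine Finset.mem_filter.mpr ⟨map_mem hU hYL hY1, ?_⟩
        refine lt_of_le_of_ne (inf_le_inf_right U hXY.le) ?_
        intro heq
        exact hXY.ne (inj_infU hU hX hYL h1 hY1 heq)
      · intro Y₁ hY₁ Y₂ hY₂ heq
        obtain ⟨hY₁L, hXY₁⟩ := Finset.mem_filter.mp hY₁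
        obtain ⟨hY₂L, hXY₂⟩ := Finset.mem_filter.mp hY₂
        have h₁ : 1 ≤ adim Y₁ := by
          have := adim_lt_of_lt (ne_bot_of_mem_interPoset hX) hXY₁; omega
        have h₂ : 1 ≤ adim Y₂ := by
          have := adim_lt_of_lt (ne_bot_of_mem_interPoset hX) hXY₂; omega
        exact inj_infU hU hY₁L hY₂L h₁ h₂ heq
      · intro Y' hY'
        obtain ⟨hY'L, hXY'⟩ := Finset.mem_filter.mp hY'
        obtain ⟨Y, hYL, hY1, hYU⟩ := surj_mem hU hY'L
        have hXY : X < Y := by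
          refine lt_of_le_of_ne (le_of_infU_le hU hX hYL h1 ?_) ?_
          · exact hXY'.le.trans (hYU.symm.le.trans inf_le_left)
          · rintro rfl
            exact hXY'.ne hYU
        exact ⟨Y, Finset.mem_filter.mpr ⟨hYL, hXY⟩, hYU⟩
      · intro Y hY
        obtain ⟨hYL, hXY⟩ := Finset.mem_filter.mp hY
        have hY1 : 1 ≤ adim Y := by
          have := adim_lt_of_lt (ne_bot_of_mem_interPoset hX) hXY; omega
        exact (ih Y hYL hY1).symm

end Generic
end AuxProof

end Arrangement

open Arrangement in
/-- If `U` is a hyperplane generic to the (essential) arrangement `𝒜`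
in `ℂ^ℓ`, then `χ(𝒜 ∩ U, t) = (χ(𝒜, t) - χ(𝒜, 0)) / t`, i.e.
`t · χ(𝒜 ∩ U, t) = χ(𝒜, t) - χ(𝒜, 0)`. -/
theorem charPoly_restriction (ℓ : ℕ) (𝒜 : Finset (AffineSubspace ℂ (Vsp ℓ)))
    (hhyp : ∀ H ∈ 𝒜, IsHyperplaneIn ⊤ H) (hess : EssentialIn ⊤ 𝒜)
    (U : AffineSubspace ℂ (Vsp ℓ)) (hU : GenericTo U 𝒜) :
    Polynomial.X * charPoly U (restrictTo U 𝒜) =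
      charPoly ⊤ 𝒜 - Polynomial.C ((charPoly ⊤ 𝒜).eval 0) := by
  classical
  have heval : (charPoly ⊤ 𝒜).eval 0 =
      ∑ X ∈ (interPoset ⊤ 𝒜).filter (fun X => ¬ 1 ≤ adim X), mobius ⊤ 𝒜 X := by
    rw [charPoly, eval_finset_sum,
      ← Finset.sum_filter_add_sum_filter_not (interPoset ⊤ 𝒜) (fun X => 1 ≤ adim X)]
    rw [Finset.sum_eq_zero, zero_add]
    · apply Finset.sum_congr rfl
      intro X hX
      have h0 : adim X = 0 := by have := (Finset.mem_filter.mp hX).2; omega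
      simp [h0]
    · intro X hX
      have h1 := (Finset.mem_filter.mp hX).2
      simp [zero_pow (by omega : adim X ≠ 0)]
  have hsub : charPoly ⊤ 𝒜 - Polynomial.C ((charPoly ⊤ 𝒜).eval 0) =
      ∑ X ∈ (interPoset ⊤ 𝒜).filter (fun X => 1 ≤ adim X),
        C (mobius ⊤ 𝒜 X) * (Polynomial.X : Polynomial ℤ) ^ adim X := by
    rw [heval, map_sum, charPoly,
      ← Finset.sum_filter_add_sum_filter_not (interPoset ⊤ 𝒜) (fun X => 1 ≤ adim X)]
    have hc : ∀ X ∈ (interPoset ⊤ 𝒜).filter (fun X => ¬ 1 ≤ adim X),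
        C (mobius ⊤ 𝒜 X) * (Polynomial.X : Polynomial ℤ) ^ adim X = C (mobius ⊤ 𝒜 X) := by
      intro X hX
      have h0 : adim X = 0 := by have := (Finset.mem_filter.mp hX).2; omega
      simp [h0]
    rw [Finset.sum_congr rfl hc]
    exact add_sub_cancel_right _ _
  rw [hsub, charPoly, Finset.mul_sum]
  refine (Finset.sum_bij (fun X _ => X ⊓ U) ?_ ?_ ?_ ?_).symm
  · intro X hX
    obtain ⟨hXL, h1⟩ := Finset.mem_filter.mp hX
    exact map_mem hU hXL h1
  · intro X₁ h₁ X₂ h₂ heq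
    obtain ⟨h₁L, h₁1⟩ := Finset.mem_filter.mp h₁
    obtain ⟨h₂L, h₂1⟩ := Finset.mem_filter.mp h₂
    exact inj_infU hU h₁L h₂L h₁1 h₂1 heq
  · intro Y' hY'
    obtain ⟨Y, hYL, hY1, hYU⟩ := surj_mem hU hY'
    exact ⟨Y, Finset.mem_filter.mpr ⟨hYL, hY1⟩, hYU⟩
  · intro X hX
    obtain ⟨hXL, h1⟩ := Finset.mem_filter.mp hX
    have hm : mobius U (restrictTo U 𝒜) (X ⊓ U) = mobius ⊤ 𝒜 X :=
      mobiusFuel_restrict hhyp hU ℓ X hXL h1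
    have ha : adim (X ⊓ U) + 1 = adim X := ((hU.2 X hXL).2 h1).2
    rw [hm, ← ha, pow_succ]
    ring
end
end
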